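/- Let Λ be an Artin algebra and S a simple Λ-module whose first syzygy Ω¹S is nonzero semisimple and does not contain S as a direct summand. Let S₁ be a simple submodule of Ω¹S and m the maximal integer with S₁^m a direct summand of Ω¹S. Then the cokernel M of the composite inclusion Ω¹S/S₁^m ↪ Ω¹S ↪ P₀(S) (i.e. the module fitting in 0 → Ω¹S/S₁^m → P₀(S) → M → 0) is indecomposable and τ-rigid. -/

import Mathlib

open CategoryTheory

section ARPrelude

variable (Λ : Type) [Ring Λ]

/-- The Jacobson radical of `Λ` squares to zero. -/
def RadicalSquareZero : Prop :=
  ∀ a ∈ Ideal.jacobson (⊥ : Ideal Λ), ∀ b ∈ Ideal.jacobson (⊥ : Ideal Λ), a * b = 0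

section ModDefs

variable (M : Type) [AddCommGroup M] [Module Λ M]

/-- The submodule `rM` of `M`, where `r` is the Jacobson radical of `Λ`. -/
def radSub : Submodule Λ M :=
  Submodule.span Λ {x : M | ∃ a ∈ Ideal.jacobson (⊥ : Ideal Λ), ∃ m : M, x = a • m}

/-- `M` is an indecomposable (nonzero) module. -/
def IsIndec : Prop :=
  Nontrivial M ∧ ∀ N₁ N₂ : Submodule Λ M, IsCompl N₁ N₂ → N₁ = ⊥ ∨ N₂ = ⊥

/-- The socle of `M`: the sum of all simple submodules. -/
def socle : Submodule Λ M :=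
  sSup {N : Submodule Λ M | IsSimpleModule Λ ↥N}

end ModDefs

/-- `f : P → M` is a projective cover: `P` projective, `f` a superfluous epimorphism. -/
structure IsProjCover {P M : Type} [AddCommGroup P] [Module Λ P] [AddCommGroup M] [Module Λ M]
    (f : P →ₗ[Λ] M) : Prop where
  proj : Module.Projective Λ P
  surj : Function.Surjective f
  superfluous : ∀ N : Submodule Λ P, N ⊔ LinearMap.ker f = ⊤ → N = ⊤

/-- `0 → A → E → C → 0` (given by `f`, `g`) is an almost split (Auslander–Reiten) sequence. -/
structure IsAlmostSplitSeq {A E C : Type} [AddCommGroup A] [Module Λ A]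
    [AddCommGroup E] [Module Λ E] [AddCommGroup C] [Module Λ C]
    (f : A →ₗ[Λ] E) (g : E →ₗ[Λ] C) : Prop where
  inj : Function.Injective f
  surj : Function.Surjective g
  exact : LinearMap.range f = LinearMap.ker g
  not_split : ¬ ∃ s : C →ₗ[Λ] E, g ∘ₗ s = LinearMap.id
  indecA : IsIndec Λ A
  indecC : IsIndec Λ C
  left_almost : ∀ (X : ModuleCat.{0} Λ) (h : A →ₗ[Λ] ↥X),
    (¬ ∃ r : ↥X →ₗ[Λ] A, r ∘ₗ h = LinearMap.id) → ∃ t : E →ₗ[Λ] ↥X, t ∘ₗ f = h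
  right_almost : ∀ (X : ModuleCat.{0} Λ) (h : ↥X →ₗ[Λ] C),
    (¬ ∃ s : C →ₗ[Λ] ↥X, h ∘ₗ s = LinearMap.id) → ∃ t : ↥X →ₗ[Λ] E, g ∘ₗ t = h

/-- `A` is the Auslander–Reiten translate `τ C` of `C`, witnessed by an almost split
sequence `0 → A → E → C → 0`. -/
def IsARTranslate (A C : Type) [AddCommGroup A] [Module Λ A] [AddCommGroup C] [Module Λ C] :
    Prop :=
  ∃ (E : ModuleCat.{0} Λ) (f : A →ₗ[Λ] ↥E) (g : ↥E →ₗ[Λ] C), IsAlmostSplitSeq Λ f g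

/-- `M` is τ-rigid: every homomorphism `M → τ M` vanishes (vacuous if `M` is projective,
in which case `τ M = 0`). -/
def IsTauRigid (M : Type) [AddCommGroup M] [Module Λ M] : Prop :=
  ∀ (K : ModuleCat.{0} Λ), IsARTranslate Λ (↥K) M → ∀ f : M →ₗ[Λ] ↥K, f = 0

/-- `Q` is (isomorphic to) a direct summand of `P`. -/
def IsDSummand (Q P : Type) [AddCommGroup Q] [Module Λ Q] [AddCommGroup P] [Module Λ P] :
    Prop :=
  ∃ (i : Q →ₗ[Λ] P) (r : P →ₗ[Λ] Q), r ∘ₗ i = LinearMap.id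

/-- Every short exact sequence `0 → N → E → M → 0` splits, i.e. `Ext¹(M, N) = 0`. -/
def Ext1Vanishes (M N : Type) [AddCommGroup M] [Module Λ M] [AddCommGroup N] [Module Λ N] :
    Prop :=
  ∀ (E : ModuleCat.{0} Λ) (i : N →ₗ[Λ] ↥E) (p : ↥E →ₗ[Λ] M),
    Function.Injective i → Function.Surjective p → LinearMap.range i = LinearMap.ker p →
    ∃ s : M →ₗ[Λ] ↥E, p ∘ₗ s = LinearMap.id

/-- Projective dimension at most `n`. -/
def ProjDimLE : ℕ → ModuleCat.{0} Λ → Prop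
  | 0, M => Module.Projective Λ ↥M
  | n + 1, M => ∃ (P : ModuleCat.{0} Λ) (f : ↥P →ₗ[Λ] ↥M), Module.Projective Λ ↥P ∧
      Function.Surjective f ∧ ProjDimLE n (ModuleCat.of Λ (LinearMap.ker f))

/-- Injective dimension at most `n`. -/
def InjDimLE : ℕ → ModuleCat.{0} Λ → Prop
  | 0, M => Module.Injective Λ ↥M
  | n + 1, M => ∃ (I : ModuleCat.{0} Λ) (f : ↥M →ₗ[Λ] ↥I), Module.Injective Λ ↥I ∧
      Function.Injective f ∧ InjDimLE n (ModuleCat.of Λ (↥I ⧸ LinearMap.range f))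

/-- `Λ` has finite global dimension. -/
def FiniteGlobalDim : Prop :=
  ∃ n, ∀ M : ModuleCat.{0} Λ, ProjDimLE Λ n M

/-- `Λ` is hereditary: submodules of projective modules are projective. -/
def IsHereditaryAlg : Prop :=
  ∀ (P : ModuleCat.{0} Λ), Module.Projective Λ ↥P → ∀ N : Submodule Λ ↥P, Module.Projective Λ ↥N

/-- A module is uniserial if its submodules form a chain. -/
def IsUniserial (M : Type) [AddCommGroup M] [Module Λ M] : Prop :=
  ∀ N₁ N₂ : Submodule Λ M, N₁ ≤ N₂ ∨ N₂ ≤ N₁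

/-- `Λ` is a Nakayama algebra: indecomposable projective and indecomposable injective
modules are uniserial. -/
def IsNakayamaAlg : Prop :=
  ∀ M : ModuleCat.{0} Λ, IsIndec Λ ↥M →
    (Module.Projective Λ ↥M ∨ Module.Injective Λ ↥M) → IsUniserial Λ ↥M

/-- `Λ` is connected: no nontrivial central idempotents. -/
def IsConnectedAlg : Prop :=
  ∀ e : Λ, IsIdempotentElem e → e ∈ Subring.center Λ → e = 0 ∨ e = 1

/-- `e` is a primitive idempotent. -/
def IsPrimitiveIdempotent (e : Λ) : Prop :=
  IsIdempotentElem e ∧ e ≠ 0 ∧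
    ¬ ∃ e₁ e₂ : Λ, IsIdempotentElem e₁ ∧ IsIdempotentElem e₂ ∧ e₁ ≠ 0 ∧ e₂ ≠ 0 ∧
      e₁ * e₂ = 0 ∧ e₂ * e₁ = 0 ∧ e = e₁ + e₂

/-- `Λ` is basic: distinct orthogonal primitive idempotents give non-isomorphic
indecomposable projectives. -/
def IsBasicAlg : Prop :=
  ∀ e f : Λ, IsPrimitiveIdempotent Λ e → IsPrimitiveIdempotent Λ f → e * f = 0 → f * e = 0 →
    Nonempty ((Submodule.span Λ ({e} : Set Λ)) ≃ₗ[Λ] (Submodule.span Λ ({f} : Set Λ))) → e = f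

end ARPrelude


section Helpers
variable {Λ : Type} [Ring Λ]

lemma helper_simple_semisimple (Z : Type) [AddCommGroup Z] [Module Λ Z] [IsSimpleModule Λ Z] :
    IsSemisimpleModule Λ Z := by
  apply IsSemisimpleModule.of_sSup_simples_eq_top
  apply top_unique
  exact le_sSup (show IsSimpleModule Λ (⊤ : Submodule Λ Z) from .congr Submodule.topEquiv)

lemma helper_pi_semisimple (ι : Type) [Finite ι] [DecidableEq ι] (Z : Type) [AddCommGroup Z]
    [Module Λ Z] [IsSimpleModule Λ Z] : IsSemisimpleModule Λ (ι → Z) := by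
  haveI := helper_simple_semisimple (Λ := Λ) Z
  apply isSemisimpleModule_of_isSemisimpleModule_submodule'
    (p := fun i => LinearMap.range (LinearMap.single Λ (fun _ : ι => Z) i))
  · intro i
    exact .congr (LinearEquiv.ofInjective _ (Pi.single_injective (M := fun _ : ι => Z) i)).symm
  · exact LinearMap.iSup_range_single Λ _

lemma helper_simple_iso_of_pi {Z X : Type} [AddCommGroup Z] [Module Λ Z] [AddCommGroup X]
    [Module Λ X] [IsSimpleModule Λ Z] [IsSimpleModule Λ X] {ι : Type}
    (f : X →ₗ[Λ] (ι → Z)) (hf : f ≠ 0) : Nonempty (X ≃ₗ[Λ] Z) := by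
  have hex : ∃ j : ι, (LinearMap.proj j).comp f ≠ 0 := by
    by_contra hcon
    push_neg at hcon
    apply hf
    ext x j
    exact congrFun (congrArg DFunLike.coe (hcon j)) x
  obtain ⟨j, hj⟩ := hex
  set g := (LinearMap.proj (R := Λ) (φ := fun _ : ι => Z) j).comp f with hg
  have hinj : Function.Injective g := g.injective_or_eq_zero.resolve_right hj
  have hsurj : Function.Surjective g := by
    rcases eq_bot_or_eq_top (LinearMap.range g) with h | h
    · exact absurd (LinearMap.range_eq_bot.mp h) hj
    · exact LinearMap.range_eq_top.mp h
  exact ⟨LinearEquiv.ofBijective g ⟨hinj, hsurj⟩⟩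

lemma helper_simple_iso_of_subquot {V U Z : Type} [AddCommGroup V] [Module Λ V]
    [AddCommGroup U] [Module Λ U] [AddCommGroup Z] [Module Λ Z]
    [IsSimpleModule Λ U] [IsSimpleModule Λ Z] {ι : Type} [Finite ι] [DecidableEq ι]
    (f : V →ₗ[Λ] (ι → Z)) (hf : Function.Injective f)
    (θ : V →ₗ[Λ] U) (hθ : Function.Surjective θ) : Nonempty (U ≃ₗ[Λ] Z) := by
  haveI := helper_pi_semisimple (Λ := Λ) ι Z
  haveI : IsSemisimpleModule Λ V := .congr (LinearEquiv.ofInjective f hf)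
  obtain ⟨V₂, hV₂⟩ := exists_isCompl (LinearMap.ker θ)
  have hinj2 : Function.Injective (θ ∘ₗ V₂.subtype) := by
    rw [← LinearMap.ker_eq_bot, LinearMap.ker_comp]
    rw [Submodule.eq_bot_iff]
    intro x hx
    have : (V₂.subtype x : V) ∈ LinearMap.ker θ ⊓ V₂ := ⟨hx, x.2⟩
    have hbot := hV₂.disjoint.le_bot this
    exact Subtype.ext (by simpa using hbot)
  have hsurj2 : Function.Surjective (θ ∘ₗ V₂.subtype) := by
    intro y
    obtain ⟨v, hv⟩ := hθ y
    have hvtop : v ∈ LinearMap.ker θ ⊔ V₂ := by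
      rw [codisjoint_iff.mp hV₂.codisjoint]; trivial
    obtain ⟨k, hk, w, hw, rfl⟩ := Submodule.mem_sup.mp hvtop
    refine ⟨⟨w, hw⟩, ?_⟩
    simpa [LinearMap.mem_ker.mp hk] using hv
  set e := LinearEquiv.ofBijective (θ ∘ₗ V₂.subtype) ⟨hinj2, hsurj2⟩ with he
  set g : U →ₗ[Λ] (ι → Z) := f ∘ₗ V₂.subtype ∘ₗ (e.symm : U →ₗ[Λ] V₂) with hgdef
  have hginj : Function.Injective g := by
    simp only [hgdef, LinearMap.coe_comp]
    exact hf.comp (V₂.injective_subtype.comp e.symm.injective)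
  have hg0 : g ≠ 0 := by
    intro h0
    haveI : Nontrivial U := IsSimpleModule.nontrivial Λ U
    obtain ⟨x, hx⟩ := exists_ne (0 : U)
    apply hx
    apply hginj
    rw [h0]; simp
  exact helper_simple_iso_of_pi g hg0

end Helpers


section Helpers2
variable {Λ : Type} [Ring Λ]

-- case A helper
lemma helper_caseA {X U Z : Type} [AddCommGroup X] [Module Λ X]
    [AddCommGroup U] [Module Λ U] [AddCommGroup Z] [Module Λ Z]
    [IsSimpleModule Λ U] [IsSimpleModule Λ Z] {ι : Type} [Finite ι] [DecidableEq ι]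
    (Ψ : X →ₗ[Λ] (ι → Z)) (W' : Submodule Λ X)
    (θ : ↥W' →ₗ[Λ] U) (hθ : Function.Surjective θ)
    (hcase : Submodule.comap W'.subtype (LinearMap.ker Ψ) ≤ LinearMap.ker θ) :
    Nonempty (U ≃ₗ[Λ] Z) := by
  set R_W := Submodule.comap W'.subtype (LinearMap.ker Ψ) with hRW
  have hkerEq : LinearMap.ker (Ψ ∘ₗ W'.subtype) = R_W := by
    rw [LinearMap.ker_comp, hRW]
  have hχinj : Function.Injective (R_W.liftQ (Ψ ∘ₗ W'.subtype) hkerEq.ge) := by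
    rw [← LinearMap.ker_eq_bot]
    exact Submodule.ker_liftQ_eq_bot _ _ _ hkerEq.le
  have hθbarsurj : Function.Surjective (R_W.liftQ θ hcase) := by
    intro y
    obtain ⟨w, hw⟩ := hθ y
    exact ⟨R_W.mkQ w, hw⟩
  exact helper_simple_iso_of_subquot _ hχinj _ hθbarsurj

-- case B helper
lemma helper_caseB {X U Z : Type} [AddCommGroup X] [Module Λ X]
    [AddCommGroup U] [Module Λ U] [AddCommGroup Z] [Module Λ Z]
    [IsSimpleModule Λ U] [IsSimpleModule Λ Z] {ι : Type} [Finite ι] [DecidableEq ι]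
    (κ : Submodule Λ X) (β : ↥κ →ₗ[Λ] (ι → Z)) (hβ : Function.Injective β)
    (W' : Submodule Λ X) (δ : ↥(Submodule.comap W'.subtype κ) →ₗ[Λ] U)
    (hδ : Function.Surjective δ) : Nonempty (U ≃ₗ[Λ] Z) := by
  have hmem : ∀ x : ↥(Submodule.comap W'.subtype κ),
      W'.subtype ((Submodule.comap W'.subtype κ).subtype x) ∈ κ := fun x => x.2
  have hinclinj : Function.Injective (LinearMap.codRestrict κ
      (W'.subtype ∘ₗ (Submodule.comap W'.subtype κ).subtype) hmem) := by
    intro a b hab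
    have h1 := Subtype.ext_iff.mp hab
    simp only [LinearMap.codRestrict_apply, LinearMap.coe_comp, Function.comp_apply] at h1
    exact (Submodule.comap W'.subtype κ).injective_subtype (W'.injective_subtype h1)
  exact helper_simple_iso_of_subquot (β ∘ₗ LinearMap.codRestrict κ
    (W'.subtype ∘ₗ (Submodule.comap W'.subtype κ).subtype) hmem) (hβ.comp hinclinj) δ hδ

-- embed the kernel of a componentwise map into a power of the kernel
lemma helper_ker_embed {X Z : Type} [AddCommGroup X] [Module Λ X] [AddCommGroup Z] [Module Λ Z]
    {ι : Type} (f : X →ₗ[Λ] Z) :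
    ∃ g : ↥(LinearMap.ker (LinearMap.pi (fun j : ι => f ∘ₗ LinearMap.proj j)))
        →ₗ[Λ] (ι → ↥(LinearMap.ker f)), Function.Injective g := by
  have hmem : ∀ (x : ↥(LinearMap.ker (LinearMap.pi (fun j : ι => f ∘ₗ LinearMap.proj j))))
      (j : ι), (x : ι → X) j ∈ LinearMap.ker f := by
    intro x j
    have hx := LinearMap.mem_ker.mp x.2
    exact LinearMap.mem_ker.mpr (congrFun hx j)
  refine ⟨LinearMap.pi (fun j => LinearMap.codRestrict (LinearMap.ker f)
    ((LinearMap.proj (R := Λ) (φ := fun _ : ι => X) j) ∘ₗ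
      (LinearMap.ker (LinearMap.pi (fun j : ι => f ∘ₗ LinearMap.proj j))).subtype)
    (fun x => hmem x j)), ?_⟩
  intro a b hab
  apply Subtype.ext
  funext j
  exact congrArg Subtype.val (congrFun hab j)

-- apply an injective map componentwise and flatten
lemma helper_pi_comp_flatten {Y Z : Type} [AddCommGroup Y] [Module Λ Y]
    [AddCommGroup Z] [Module Λ Z] {ι κ : Type} (f : Y →ₗ[Λ] (κ → Z))
    (hf : Function.Injective f) :
    ∃ g : (ι → Y) →ₗ[Λ] (ι × κ → Z), Function.Injective g := by
  refine ⟨LinearMap.pi (fun jk : ι × κ => (LinearMap.proj jk.2) ∘ₗ f ∘ₗ (LinearMap.proj jk.1)),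
    ?_⟩
  intro a b hab
  funext j
  apply hf
  funext k
  exact congrFun hab (j, k)

-- a simple submodule of a complemented piece gives a direct summand
lemma helper_summand_simple {KM Z : Type} [AddCommGroup KM] [Module Λ KM]
    [AddCommGroup Z] [Module Λ Z]
    {C T : Submodule Λ KM} (hCT : IsCompl C T)
    {U V : Submodule Λ ↥C} (hUV : IsCompl U V)
    (e : ↥U ≃ₗ[Λ] Z) : IsDSummand Λ Z KM := by
  refine ⟨C.subtype ∘ₗ U.subtype ∘ₗ (e.symm : Z →ₗ[Λ] ↥U),
    (e : ↥U →ₗ[Λ] Z) ∘ₗ (Submodule.projectionOnto U V hUV) ∘ₗ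
    (Submodule.projectionOnto C T hCT), ?_⟩
  ext x
  simp [Submodule.projectionOnto_apply_left]

lemma helper_summand_succ {KM Z : Type} [AddCommGroup KM] [Module Λ KM]
    [AddCommGroup Z] [Module Λ Z] {m : ℕ}
    {C T : Submodule Λ KM} (hCT : IsCompl C T)
    {U V : Submodule Λ ↥C} (hUV : IsCompl U V)
    (e : ↥U ≃ₗ[Λ] Z) (eT : ↥T ≃ₗ[Λ] (Fin m → Z)) :
    IsDSummand Λ (Fin (m + 1) → Z) KM := by
  classical
  set rU : KM →ₗ[Λ] Z := (e : ↥U →ₗ[Λ] Z) ∘ₗ (Submodule.projectionOnto U V hUV) ∘ₗ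
    (Submodule.projectionOnto C T hCT) with hrU
  set rT : KM →ₗ[Λ] (Fin m → Z) := (eT : ↥T →ₗ[Λ] (Fin m → Z)) ∘ₗ
    (Submodule.projectionOnto T C hCT.symm) with hrT
  set jU : Z →ₗ[Λ] KM := C.subtype ∘ₗ U.subtype ∘ₗ (e.symm : Z →ₗ[Λ] ↥U) with hjU
  set jT : (Fin m → Z) →ₗ[Λ] KM := T.subtype ∘ₗ (eT.symm : (Fin m → Z) →ₗ[Λ] ↥T) with hjT
  refine ⟨jU ∘ₗ LinearMap.proj 0 + jT ∘ₗ LinearMap.funLeft Λ Z Fin.succ,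
    LinearMap.pi (fun j => Fin.cases rU (fun k => (LinearMap.proj k) ∘ₗ rT) j), ?_⟩
  apply LinearMap.ext
  intro f
  funext j
  simp only [LinearMap.coe_comp, Function.comp_apply, LinearMap.pi_apply, LinearMap.id_apply,
    LinearMap.add_apply, LinearMap.funLeft_apply, LinearMap.proj_apply]
  refine Fin.cases ?_ ?_ j
  · rw [Fin.cases_zero]
    simp [hrU, hrT, hjU, hjT, Submodule.projectionOnto_apply_left,
      Submodule.projectionOnto_apply_right, LinearMap.funLeft_apply]
  · intro k
    rw [Fin.cases_succ]
    simp [hrU, hrT, hjU, hjT, Submodule.projectionOnto_apply_left,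
      Submodule.projectionOnto_apply_right, LinearMap.funLeft_apply]

end Helpers2

set_option maxHeartbeats 1000000 in
/-- Construction of indecomposable τ-rigid modules: if `S` is simple with
`Ω¹S` nonzero semisimple not containing `S` as a summand, `S₁` a simple submodule of
`Ω¹S` and `m` maximal with `S₁^m` a summand of `Ω¹S`, then the cokernel `M` of
`Ω¹S/S₁^m ↪ P₀(S)` (the quotient of `P₀(S)` by a complement `C` of `S₁^m` in `Ω¹S`) is
indecomposable and τ-rigid (`Ext¹(M, N) = 0` for all `N ∈ Fac M`). -/
theorem construction_of_indec_tau_rigid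
    (Λ : Type) [Ring Λ] [IsArtinianRing Λ]
    (S : Type) [AddCommGroup S] [Module Λ S] (hS : IsSimpleModule Λ S)
    (P : Type) [AddCommGroup P] [Module Λ P] (p : P →ₗ[Λ] S) (hp : IsProjCover Λ p)
    (hne : Nontrivial ↥(LinearMap.ker p))
    (hss : IsSemisimpleModule Λ ↥(LinearMap.ker p))
    (hSnot : ¬ IsDSummand Λ S ↥(LinearMap.ker p))
    (S₁ : Submodule Λ ↥(LinearMap.ker p)) (hS₁ : IsSimpleModule Λ ↥S₁)
    (m : ℕ) (hm : IsDSummand Λ (Fin m → ↥S₁) ↥(LinearMap.ker p))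
    (hmax : ¬ IsDSummand Λ (Fin (m + 1) → ↥S₁) ↥(LinearMap.ker p)) :
    ∀ (C T : Submodule Λ ↥(LinearMap.ker p)), IsCompl C T →
      Nonempty (↥T ≃ₗ[Λ] (Fin m → ↥S₁)) →
      IsIndec Λ (P ⧸ Submodule.map (LinearMap.ker p).subtype C) ∧
      (∀ (N : ModuleCat.{0} Λ),
        (∃ (t : ℕ)
            (q : (Fin t → (P ⧸ Submodule.map (LinearMap.ker p).subtype C)) →ₗ[Λ] ↥N),
          Function.Surjective q) →
        Ext1Vanishes Λ (P ⧸ Submodule.map (LinearMap.ker p).subtype C) ↥N) := by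
  classical
  haveI := hS
  haveI := hS₁
  haveI := hss
  haveI := hp.proj
  intro C T hCT hTiso
  obtain ⟨eT⟩ := hTiso
  set C' : Submodule Λ P := Submodule.map (LinearMap.ker p).subtype C with hC'def
  have hC'K : C' ≤ LinearMap.ker p := by
    rintro x ⟨c, hc, rfl⟩
    exact c.2
  set pbar : (P ⧸ C') →ₗ[Λ] S := C'.liftQ p hC'K with hpbardef
  have hpbar_surj : Function.Surjective pbar := by
    intro s
    obtain ⟨x, hx⟩ := hp.surj s
    exact ⟨C'.mkQ x, hx⟩
  haveI hSnt : Nontrivial S := IsSimpleModule.nontrivial Λ S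
  have hMnt : Nontrivial (P ⧸ C') := by
    obtain ⟨s, hs⟩ := exists_ne (0 : S)
    obtain ⟨x, hx⟩ := hpbar_surj s
    exact ⟨x, 0, fun h => hs (by rw [← hx, h, map_zero])⟩
  set J : Submodule Λ (P ⧸ C') := (LinearMap.ker p).map C'.mkQ with hJdef
  have hcomapJ : Submodule.comap C'.mkQ J = LinearMap.ker p := by
    rw [hJdef, Submodule.comap_map_eq, Submodule.ker_mkQ, sup_eq_left.mpr hC'K]
  -- every proper submodule is contained in J
  have key1 : ∀ N : Submodule Λ (P ⧸ C'), N ≠ ⊤ → N ≤ J := by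
    intro N hN
    have hcomK : Submodule.comap C'.mkQ N ≤ LinearMap.ker p := by
      by_contra hcon
      obtain ⟨x, hxN, hxK⟩ := SetLike.not_le_iff_exists.mp hcon
      have hmap : Submodule.map p (Submodule.comap C'.mkQ N) = ⊤ := by
        rcases eq_bot_or_eq_top (Submodule.map p (Submodule.comap C'.mkQ N)) with h | h
        · exfalso
          apply hxK
          have : p x ∈ Submodule.map p (Submodule.comap C'.mkQ N) := ⟨x, hxN, rfl⟩
          rw [h] at this
          exact this
        · exact h
      have hsup : Submodule.comap C'.mkQ N ⊔ LinearMap.ker p = ⊤ := by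
        rw [eq_top_iff]
        intro y _
        have : p y ∈ Submodule.map p (Submodule.comap C'.mkQ N) := by rw [hmap]; trivial
        obtain ⟨z, hz, hzy⟩ := this
        refine Submodule.mem_sup.mpr ⟨z, hz, y - z, ?_, by abel⟩
        show p (y - z) = 0
        rw [map_sub, hzy, sub_self]
      have := hp.superfluous _ hsup
      apply hN
      have hNmap : Submodule.map C'.mkQ (Submodule.comap C'.mkQ N) = N :=
        Submodule.map_comap_eq_of_surjective (Submodule.mkQ_surjective C') N
      rw [← hNmap, this, Submodule.map_top, Submodule.range_mkQ]
    have hNmap : Submodule.map C'.mkQ (Submodule.comap C'.mkQ N) = N :=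
      Submodule.map_comap_eq_of_surjective (Submodule.mkQ_surjective C') N
    rw [← hNmap]
    exact Submodule.map_mono hcomK
  have key2 : J ≠ ⊤ := by
    intro h
    have hKtop : LinearMap.ker p = ⊤ := by
      rw [← hcomapJ, h, Submodule.comap_top]
    obtain ⟨s, hs⟩ := exists_ne (0 : S)
    obtain ⟨x, hx⟩ := hp.surj s
    apply hs
    rw [← hx]
    have : x ∈ LinearMap.ker p := by rw [hKtop]; trivial
    exact this
  constructor
  · -- indecomposability
    refine ⟨hMnt, ?_⟩
    intro N₁ N₂ hcompl
    by_contra hcon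
    push_neg at hcon
    have h1 : N₁ ≠ ⊤ := by
      rintro rfl
      exact hcon.2 (le_bot_iff.mp (le_trans (le_inf le_top le_rfl) hcompl.disjoint.le_bot))
    have h2 : N₂ ≠ ⊤ := by
      rintro rfl
      exact hcon.1 (le_bot_iff.mp (le_trans (le_inf le_rfl le_top) hcompl.disjoint.le_bot))
    apply key2
    apply top_unique
    rw [← codisjoint_iff.mp hcompl.codisjoint]
    exact sup_le (key1 N₁ h1) (key1 N₂ h2)
  · -- tau-rigidity / Ext vanishing
    intro N hN
    obtain ⟨t, q, hq⟩ := hN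
    intro E ii pE hii hpE hrange
    obtain ⟨h, hh⟩ := Module.projective_lifting_property pE C'.mkQ hpE
    have hhC : ∀ x ∈ C', h x ∈ LinearMap.range ii := by
      intro x hx
      rw [hrange, LinearMap.mem_ker]
      have h1 : pE (h x) = C'.mkQ x := congrFun (congrArg DFunLike.coe hh) x
      rw [h1, Submodule.mkQ_apply]
      exact (Submodule.Quotient.mk_eq_zero C').mpr hx
    set eN : ↥N ≃ₗ[Λ] LinearMap.range ii := LinearEquiv.ofInjective ii hii with heN
    set φ : ↥C' →ₗ[Λ] ↥N := (eN.symm : LinearMap.range ii →ₗ[Λ] ↥N) ∘ₗ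
      LinearMap.codRestrict (LinearMap.range ii) (h ∘ₗ C'.subtype) (fun c => hhC c.1 c.2)
      with hφdef
    have hcoe : ∀ z : LinearMap.range ii, ii (eN.symm z) = (z : ↥E) := by
      intro z
      have h2 := eN.apply_symm_apply z
      have h3 : ((eN (eN.symm z)) : ↥E) = (z : ↥E) := congrArg Subtype.val h2
      rwa [heN, LinearEquiv.ofInjective_apply] at h3
    have hφ : ∀ x : ↥C', ii (φ x) = h x.1 := fun x => hcoe _
    suffices hφ0 : φ = 0 by
      have hker : C' ≤ LinearMap.ker h := by
        intro x hx
        have h4 := hφ ⟨x, hx⟩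
        rw [hφ0] at h4
        simp only [LinearMap.zero_apply, map_zero] at h4
        exact LinearMap.mem_ker.mpr h4.symm
      refine ⟨C'.liftQ h hker, ?_⟩
      apply Submodule.linearMap_qext
      ext x
      show pE (h x) = C'.mkQ x
      exact congrFun (congrArg DFunLike.coe hh) x
    by_contra hφ0
    -- pass to ψ : C → N
    set eC : ↥C ≃ₗ[Λ] ↥C' :=
      Submodule.equivMapOfInjective (LinearMap.ker p).subtype
        (LinearMap.ker p).injective_subtype C with heCdef
    set ψ : ↥C →ₗ[Λ] ↥N := φ ∘ₗ (eC : ↥C →ₗ[Λ] ↥C') with hψdef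
    have hψ0 : ψ ≠ 0 := by
      intro h0
      apply hφ0
      ext x
      have h5 : ψ (eC.symm x) = 0 := by rw [h0]; rfl
      have h6 : φ (eC (eC.symm x)) = 0 := by simpa [hψdef] using h5
      simpa using h6
    -- find a simple submodule U of C on which ψ is injective
    obtain ⟨V₀, hV₀⟩ := exists_isCompl (LinearMap.ker ψ)
    have hV₀ne : V₀ ≠ ⊥ := by
      intro h0
      apply hψ0
      have h7 := codisjoint_iff.mp hV₀.codisjoint
      rw [h0, sup_bot_eq] at h7
      exact LinearMap.ker_eq_top.mp h7
    rcases IsSemisimpleModule.eq_bot_or_exists_simple_le V₀ with h0 | ⟨U, hUV₀, hU⟩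
    · exact hV₀ne h0
    haveI := hU
    have hUbot : U ≠ ⊥ := (isSimpleModule_iff_isAtom.mp hU).1
    set u : ↥U →ₗ[Λ] ↥N := ψ ∘ₗ U.subtype with hudef
    have hu0 : u ≠ 0 := by
      intro h0
      apply hUbot
      rw [eq_bot_iff]
      intro x hx
      have hxk : x ∈ LinearMap.ker ψ := by
        have h8 : u ⟨x, hx⟩ = 0 := by rw [h0]; rfl
        simpa [hudef] using h8
      exact hV₀.disjoint.le_bot ⟨hxk, hUV₀ hx⟩
    have huinj : Function.Injective u := (LinearMap.injective_or_eq_zero (R := Λ) (M := ↥U) u).resolve_right hu0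
    -- pull back through q
    set W' : Submodule Λ (Fin t → (P ⧸ C')) := Submodule.comap q (LinearMap.range u)
      with hW'def
    set eU := LinearEquiv.ofInjective u huinj with heUdef
    set θ : ↥W' →ₗ[Λ] ↥U := (eU.symm : LinearMap.range u →ₗ[Λ] ↥U) ∘ₗ
      LinearMap.codRestrict (LinearMap.range u) (q ∘ₗ W'.subtype) (fun w => w.2) with hθdef
    have hθsurj : Function.Surjective θ := by
      intro y
      obtain ⟨w, hw⟩ := hq (u y)
      have hwW : w ∈ W' := Submodule.mem_comap.mpr (hw ▸ ⟨y, rfl⟩)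
      refine ⟨⟨w, hwW⟩, ?_⟩
      apply eU.injective
      rw [hθdef]
      simp only [LinearMap.coe_comp, Function.comp_apply, LinearEquiv.coe_coe]
      rw [LinearEquiv.apply_symm_apply]
      apply Subtype.ext
      rw [heUdef, LinearEquiv.ofInjective_apply]
      exact hw
    -- the radical of (P ⧸ C')^t
    have hJker : LinearMap.ker pbar = J := by
      rw [hpbardef, Submodule.ker_liftQ]
    set Ψ : (Fin t → (P ⧸ C')) →ₗ[Λ] (Fin t → S) :=
      LinearMap.pi (fun j => pbar ∘ₗ LinearMap.proj j) with hΨdef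
    have hUiso : Nonempty (↥U ≃ₗ[Λ] S) ∨ Nonempty (↥U ≃ₗ[Λ] ↥S₁) := by
      by_cases hcase : Submodule.comap W'.subtype (LinearMap.ker Ψ) ≤ LinearMap.ker θ
      · exact Or.inl (helper_caseA (U := ↥U) (Z := S) Ψ W' θ hθsurj hcase)
      · right
        set δ : ↥(Submodule.comap W'.subtype (LinearMap.ker Ψ)) →ₗ[Λ] ↥U :=
          θ ∘ₗ (Submodule.comap W'.subtype (LinearMap.ker Ψ)).subtype with hδdef
        have hδ0 : δ ≠ 0 := by
          intro h0
          apply hcase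
          intro x hx
          have h9 : δ ⟨x, hx⟩ = 0 := by rw [h0]; rfl
          exact h9
        have hδsurj : Function.Surjective δ := by
          haveI : IsSimpleOrder (Submodule Λ ↥U) := hU.toIsSimpleOrder
          rcases eq_bot_or_eq_top (LinearMap.range δ) with h' | h'
          · exact absurd (LinearMap.range_eq_bot.mp h') hδ0
          · exact LinearMap.range_eq_top.mp h'
        -- J is isomorphic to T
        set gJT : ↥T →ₗ[Λ] ↥J := LinearMap.codRestrict J
          (C'.mkQ ∘ₗ (LinearMap.ker p).subtype ∘ₗ T.subtype)
          (fun x => ⟨(LinearMap.ker p).subtype (T.subtype x), (T.subtype x).2, rfl⟩)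
          with hgJTdef
        have hgJTinj : Function.Injective gJT := by
          intro a b hab
          have h1 : C'.mkQ ((LinearMap.ker p).subtype (T.subtype a)) =
              C'.mkQ ((LinearMap.ker p).subtype (T.subtype b)) := congrArg Subtype.val hab
          rw [Submodule.mkQ_apply, Submodule.mkQ_apply] at h1
          have h2 : ((LinearMap.ker p).subtype (T.subtype a)) -
              ((LinearMap.ker p).subtype (T.subtype b)) ∈ C' :=
            (Submodule.Quotient.eq C').mp h1
          obtain ⟨c, hc, hceq⟩ := h2
          have h3 : c = (T.subtype a) - (T.subtype b) := by
            apply (LinearMap.ker p).injective_subtype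
            rw [hceq, map_sub]
          have h4 : ((T.subtype a) - (T.subtype b) : ↥(LinearMap.ker p)) ∈ C ⊓ T := by
            constructor
            · rw [← h3]; exact hc
            · exact sub_mem a.2 b.2
          have h5 := hCT.disjoint.le_bot h4
          rw [Submodule.mem_bot] at h5
          exact T.injective_subtype (sub_eq_zero.mp h5)
        have hgJTsurj : Function.Surjective gJT := by
          intro z
          obtain ⟨x, hxK, hxz⟩ := Submodule.mem_map.mp z.2
          have hx2 : (⟨x, hxK⟩ : ↥(LinearMap.ker p)) ∈ C ⊔ T := by
            rw [codisjoint_iff.mp hCT.codisjoint]; trivial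
          obtain ⟨c, hc, t', ht', hct⟩ := Submodule.mem_sup.mp hx2
          refine ⟨⟨t', ht'⟩, ?_⟩
          apply Subtype.ext
          show C'.mkQ ((LinearMap.ker p).subtype t') = z.1
          rw [← hxz]
          have hxe : x = (LinearMap.ker p).subtype c + (LinearMap.ker p).subtype t' := by
            have h10 := congrArg (LinearMap.ker p).subtype hct
            rw [map_add] at h10
            exact h10.symm
          rw [hxe, map_add]
          have h11 : C'.mkQ ((LinearMap.ker p).subtype c) = 0 := by
            rw [Submodule.mkQ_apply]
            exact (Submodule.Quotient.mk_eq_zero C').mpr ⟨c, hc, rfl⟩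
          rw [h11, zero_add]
        set eJT := LinearEquiv.ofBijective gJT ⟨hgJTinj, hgJTsurj⟩ with heJTdef
        -- ker pbar embeds in Fin m → S₁
        set β0 : ↥(LinearMap.ker pbar) →ₗ[Λ] (Fin m → ↥S₁) :=
          (eT : ↥T →ₗ[Λ] (Fin m → ↥S₁)) ∘ₗ (eJT.symm : ↥J →ₗ[Λ] ↥T) ∘ₗ
          ((LinearEquiv.ofEq _ _ hJker) : ↥(LinearMap.ker pbar) →ₗ[Λ] ↥J) with hβ0def
        have hβ0inj : Function.Injective β0 := by
          simp only [hβ0def, LinearMap.coe_comp, LinearEquiv.coe_coe]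
          exact eT.injective.comp (eJT.symm.injective.comp (LinearEquiv.ofEq _ _ hJker).injective)
        obtain ⟨g1, hg1⟩ := helper_ker_embed (ι := Fin t) pbar
        obtain ⟨g2, hg2⟩ := helper_pi_comp_flatten (ι := Fin t) β0 hβ0inj
        exact helper_caseB (U := ↥U) (Z := ↥S₁) (LinearMap.ker Ψ) (g2 ∘ₗ g1) (hg2.comp hg1) W' δ hδsurj
    -- derive the contradictions
    obtain ⟨V, hV⟩ := exists_isCompl U
    obtain he | he := hUiso
    · obtain ⟨e⟩ := he
      exact hSnot (helper_summand_simple hCT hV e)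
    · obtain ⟨e⟩ := he
      exact hmax (helper_summand_succ hCT hV e eT)
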